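/- Fix \alpha and t with 0 < \alpha \le t. Let m(n) be a sequence of natural numbers such that m(n) - \alpha n is bounded. Then (nt)^{m(n)} / (m(n)! \, e^{nt}) \to 0 as n \to \infty. -/

import Mathlib

open Filter

lemma stirling_lb (k : ℕ) (hk : 1 ≤ k) :
    Real.sqrt k * (k / Real.exp 1) ^ k ≤ (Nat.factorial k : ℝ) := by
  have htd : Tendsto (Stirling.stirlingSeq ∘ Nat.succ) atTop (nhds (Real.sqrt Real.pi)) :=
    Stirling.tendsto_stirlingSeq_sqrt_pi.comp (tendsto_add_atTop_nat 1)
  have h1 : Real.sqrt Real.pi ≤ Stirling.stirlingSeq k := by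
    obtain ⟨j, rfl⟩ := Nat.exists_eq_add_of_le hk
    have := Stirling.stirlingSeq'_antitone.le_of_tendsto htd j
    simpa [Function.comp, Nat.add_comm] using this
  have h2 : (1 : ℝ) ≤ Stirling.stirlingSeq k := by
    refine le_trans ?_ h1
    rw [show (1:ℝ) = Real.sqrt 1 by simp]
    exact Real.sqrt_le_sqrt (by linarith [Real.pi_gt_three])
  have hk' : (0:ℝ) < k := by exact_mod_cast hk
  have hpos : 0 < Real.sqrt (2 * k) * (k / Real.exp 1) ^ k := by positivity
  have h3 : Real.sqrt (2 * k) * (k / Real.exp 1) ^ k ≤ (Nat.factorial k : ℝ) := by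
    unfold Stirling.stirlingSeq at h2
    rw [le_div_iff₀ hpos] at h2
    linarith
  refine le_trans (mul_le_mul_of_nonneg_right ?_ (by positivity)) h3
  exact Real.sqrt_le_sqrt (by linarith)

lemma poisson_le (k : ℕ) (hk : 1 ≤ k) (l : ℝ) (hl : 0 ≤ l) :
    l ^ k / ((Nat.factorial k : ℝ) * Real.exp l) ≤ 1 / Real.sqrt k := by
  have hk' : (0:ℝ) < k := by exact_mod_cast hk
  have hA : l ^ k ≤ (k:ℝ) ^ k * Real.exp (l - k) := by
    have h2 : l / k ≤ Real.exp (l / k - 1) := by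
      have := Real.add_one_le_exp (l / k - 1); linarith
    have h3 : (l / k) ^ k ≤ Real.exp (l / k - 1) ^ k :=
      pow_le_pow_left₀ (by positivity) h2 k
    rw [← Real.exp_nat_mul] at h3
    have he : (k : ℝ) * (l / k - 1) = l - k := by field_simp
    rw [he] at h3
    have := mul_le_mul_of_nonneg_right h3 (le_of_lt (pow_pos hk' k))
    calc l ^ k = (l / k) ^ k * (k:ℝ) ^ k := by
          rw [div_pow]; field_simp
      _ ≤ Real.exp (l - k) * (k:ℝ) ^ k := this
      _ = (k:ℝ) ^ k * Real.exp (l - k) := by ring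
  have hstir := stirling_lb k hk
  have hid : ((k:ℝ) / Real.exp 1) ^ k * Real.exp l = (k:ℝ) ^ k * Real.exp (l - (k:ℝ)) := by
    rw [div_pow, ← Real.exp_nat_mul, mul_one, Real.exp_sub]
    field_simp
  have hfac : (0:ℝ) < Nat.factorial k := by exact_mod_cast Nat.factorial_pos k
  rw [div_le_div_iff₀ (by positivity) (by positivity)]
  calc l ^ k * Real.sqrt k ≤ ((k:ℝ) ^ k * Real.exp (l - k)) * Real.sqrt k :=
        mul_le_mul_of_nonneg_right hA (Real.sqrt_nonneg _)
    _ = (Real.sqrt k * ((k:ℝ) / Real.exp 1) ^ k) * Real.exp l := by rw [← hid]; ring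
    _ ≤ (Nat.factorial k : ℝ) * Real.exp l :=
        mul_le_mul_of_nonneg_right hstir (Real.exp_pos _).le
    _ = 1 * ((Nat.factorial k : ℝ) * Real.exp l) := by ring

/-- For `0 < α ≤ t` and a sequence `m(n)` with `m(n) - α n` bounded, we have
`(nt)^{m(n)}/(m(n)! e^{nt}) → 0` as `n → ∞`. -/
theorem weyl_term_small (α t : ℝ) (hα0 : 0 < α) (hαt : α ≤ t)
    (m : ℕ → ℕ) (C : ℝ) (hm : ∀ n : ℕ, |(m n : ℝ) - α * n| ≤ C) :
    Tendsto
      (fun n : ℕ =>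
        ((n : ℝ) * t) ^ (m n) / ((Nat.factorial (m n) : ℝ) * Real.exp ((n : ℝ) * t)))
      atTop (nhds 0) := by
  have ht : 0 < t := lt_of_lt_of_le hα0 hαt
  have hmc : Tendsto (fun n : ℕ => (m n : ℝ)) atTop atTop := by
    have hlin : Tendsto (fun n : ℕ => α * (n : ℝ) - C) atTop atTop :=
      tendsto_atTop_add_const_right _ (-C)
        (tendsto_natCast_atTop_atTop.const_mul_atTop hα0)
    refine tendsto_atTop_mono (fun n => ?_) hlin
    have := abs_le.mp (hm n)
    linarith [this.1]
  have hsqrt : Tendsto Real.sqrt atTop atTop := by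
    rw [tendsto_atTop_atTop]
    intro b
    refine ⟨b ^ 2, fun a ha => ?_⟩
    calc b ≤ |b| := le_abs_self b
      _ = Real.sqrt (b ^ 2) := (Real.sqrt_sq_eq_abs b).symm
      _ ≤ Real.sqrt a := Real.sqrt_le_sqrt ha
  have hsq : Tendsto (fun n : ℕ => 1 / Real.sqrt (m n)) atTop (nhds 0) := by
    simpa [one_div, Function.comp_def] using
      (tendsto_inv_atTop_zero.comp (hsqrt.comp hmc))
  refine squeeze_zero' ?_ ?_ hsq
  · filter_upwards with n
    positivity
  · have h1 : ∀ᶠ n : ℕ in atTop, (1:ℝ) ≤ (m n : ℝ) := hmc.eventually_ge_atTop 1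
    filter_upwards [h1] with n hn
    exact poisson_le (m n) (by exact_mod_cast hn) ((n : ℝ) * t) (by positivity)
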